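/- Let φ: H → D be a divisor homomorphism of commutative cancellative monoids into a free abelian (commutative, reduced) monoid D with basis P. Let G₀ = {[p] : p ∈ P} ⊆ Cl(φ). Then the induced map θ: H → B(G₀), sending a to the multiset of classes of the basis elements occurring in φ(a) (with multiplicity), is a transfer homomorphism. -/
import Mathlib


/- We model the free abelian monoid `D = ℕ₀^(P)` with basis `P` as `Multiset P`
(written additively, wrapped in `Multiplicative` to match the multiplicative monoid `H`),
and its group of fractions `Q(D)` as the free abelian group `P →₀ ℤ`. -/

/-- The canonical embedding of the free commutative monoid `Multiset P` into its group
of fractions, the free abelian group `P →₀ ℤ`. -/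
noncomputable def freeEmb {P : Type*} (S : Multiset P) : P →₀ ℤ :=
  (S.map fun p => Finsupp.single p (1 : ℤ)).sum

/-- The subgroup `Q(im φ)` of `Q(D) = P →₀ ℤ` generated by the image of `φ`. -/
noncomputable def imSubgroup {P H : Type*} [CancelCommMonoid H]
    (φ : H →* Multiplicative (Multiset P)) : AddSubgroup (P →₀ ℤ) :=
  AddSubgroup.closure (Set.range fun a : H => freeEmb (Multiplicative.toAdd (φ a)))

/-- The class group `Cl(φ) = Q(D) ⧸ Q(im φ)`. -/
noncomputable def ClassGrp {P H : Type*} [CancelCommMonoid H]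
    (φ : H →* Multiplicative (Multiset P)) : Type _ :=
  (P →₀ ℤ) ⧸ imSubgroup φ

noncomputable instance {P H : Type*} [CancelCommMonoid H]
    (φ : H →* Multiplicative (Multiset P)) : AddCommGroup (ClassGrp φ) :=
  QuotientAddGroup.Quotient.addCommGroup _

/-- The class `[d] ∈ Cl(φ)` of a divisor `d ∈ Q(D)`. -/
noncomputable def divClass {P H : Type*} [CancelCommMonoid H]
    (φ : H →* Multiplicative (Multiset P)) (d : P →₀ ℤ) : ClassGrp φ :=
  QuotientAddGroup.mk d


section Aux

lemma freeEmb_zero' {P : Type*} : freeEmb (0 : Multiset P) = 0 := rfl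

lemma freeEmb_add' {P : Type*} (S T : Multiset P) :
    freeEmb (S + T) = freeEmb S + freeEmb T := by
  simp [freeEmb]

lemma freeEmb_apply' {P : Type*} [DecidableEq P] (S : Multiset P) (q : P) :
    freeEmb S q = S.count q := by
  induction S using Multiset.induction with
  | empty => simp [freeEmb]
  | cons p S ih =>
    simp only [freeEmb, Multiset.map_cons, Multiset.sum_cons] at ih ⊢
    rw [Finsupp.add_apply, ih, Multiset.count_cons, Finsupp.single_apply]
    by_cases h : p = q
    · simp [h, add_comm]
    · simp [h, Ne.symm h]

lemma freeEmb_injective' {P : Type*} : Function.Injective (freeEmb (P := P)) := by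
  classical
  intro S T h
  ext q
  have := congrArg (fun f => f q) h
  simpa [freeEmb_apply'] using this

variable {P H : Type*} [CancelCommMonoid H] (φ : H →* Multiplicative (Multiset P))

lemma divClass_freeEmb_sum' (S : Multiset P) :
    (S.map fun p => divClass φ (Finsupp.single p 1)).sum = divClass φ (freeEmb S) := by
  have : divClass φ (freeEmb S) =
      ((S.map fun p => Finsupp.single p (1 : ℤ)).map
        (QuotientAddGroup.mk' (imSubgroup φ))).sum := by
    rw [freeEmb, ← map_multiset_sum]
    rfl
  rw [this, Multiset.map_map]
  rfl

lemma mem_im' (a : H) : freeEmb (Multiplicative.toAdd (φ a)) ∈ imSubgroup φ :=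
  AddSubgroup.subset_closure ⟨a, rfl⟩

lemma exists_diff' {d : P →₀ ℤ} (hd : d ∈ imSubgroup φ) :
    ∃ x y : H, d + freeEmb (Multiplicative.toAdd (φ y))
      = freeEmb (Multiplicative.toAdd (φ x)) := by
  refine AddSubgroup.closure_induction ?_ ?_ ?_ ?_ hd
  · rintro x ⟨a, rfl⟩
    exact ⟨a, 1, by simp [freeEmb_zero']⟩
  · exact ⟨1, 1, by simp⟩
  · rintro x y hx hy ⟨x₁, y₁, h₁⟩ ⟨x₂, y₂, h₂⟩
    refine ⟨x₁ * x₂, y₁ * y₂, ?_⟩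
    simp only [map_mul, toAdd_mul, freeEmb_add']
    rw [show x + y + (freeEmb (Multiplicative.toAdd (φ y₁))
        + freeEmb (Multiplicative.toAdd (φ y₂)))
      = (x + freeEmb (Multiplicative.toAdd (φ y₁)))
        + (y + freeEmb (Multiplicative.toAdd (φ y₂))) by abel, h₁, h₂]
  · rintro x hx ⟨a, b, h⟩
    exact ⟨b, a, by rw [← h]; abel⟩

lemma exists_rep' (hdiv : ∀ a b : H, φ a ∣ φ b → a ∣ b) (A : Multiset P)
    (hA : (A.map fun p => divClass φ (Finsupp.single p 1)).sum = 0) :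
    ∃ b : H, Multiplicative.toAdd (φ b) = A := by
  rw [divClass_freeEmb_sum'] at hA
  have hmem : freeEmb A ∈ imSubgroup φ := (QuotientAddGroup.eq_zero_iff _).1 hA
  obtain ⟨x, y, hxy⟩ := exists_diff' φ hmem
  have h2 : A + Multiplicative.toAdd (φ y) = Multiplicative.toAdd (φ x) :=
    freeEmb_injective' (by rw [freeEmb_add']; exact hxy)
  have hdvd : φ y ∣ φ x := by
    refine ⟨Multiplicative.ofAdd A, Multiplicative.toAdd.injective ?_⟩
    simp only [toAdd_mul, toAdd_ofAdd]
    rw [← h2]; exact (add_comm _ _)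
  obtain ⟨b, rfl⟩ := hdiv _ _ hdvd
  refine ⟨b, ?_⟩
  have h3 : Multiplicative.toAdd (φ (y * b))
      = Multiplicative.toAdd (φ y) + Multiplicative.toAdd (φ b) := by
    simp [map_mul]
  rw [h3] at h2
  rw [add_comm A] at h2
  exact (add_left_cancel h2).symm

lemma multiset_split' {α β : Type*} (f : α → β) :
    ∀ (S₁ S₂ : Multiset β) (A : Multiset α), A.map f = S₁ + S₂ →
      ∃ A₁ A₂, A = A₁ + A₂ ∧ A₁.map f = S₁ ∧ A₂.map f = S₂ := by
  intro S₁
  induction S₁ using Multiset.induction with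
  | empty => exact fun S₂ A h => ⟨0, A, by simp, by simp, by simpa using h⟩
  | cons g S₁ ih =>
    intro S₂ A h
    have hg : g ∈ A.map f := by rw [h]; simp
    obtain ⟨p, hp, hfp⟩ := Multiset.mem_map.1 hg
    obtain ⟨A', rfl⟩ := Multiset.exists_cons_of_mem hp
    rw [Multiset.map_cons, hfp, Multiset.cons_add] at h
    obtain ⟨A₁, A₂, rfl, h1, h2⟩ := ih S₂ A' ((Multiset.cons_inj_right g).1 h)
    exact ⟨p ::ₘ A₁, A₂, by rw [Multiset.cons_add], by simp [h1, hfp], h2⟩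

lemma multiset_lift' {α β : Type*} (f : α → β) (S : Multiset β)
    (h : ∀ g ∈ S, ∃ p, f p = g) : ∃ T : Multiset α, T.map f = S := by
  induction S using Multiset.induction with
  | empty => exact ⟨0, rfl⟩
  | cons g S ih =>
    obtain ⟨T, hT⟩ := ih fun g hg => h g (Multiset.mem_cons_of_mem hg)
    obtain ⟨p, hp⟩ := h g (Multiset.mem_cons_self g S)
    exact ⟨p ::ₘ T, by simp [hT, hp]⟩

end Aux

/-- If `φ : H → D = ℕ₀^(P)` is a divisor homomorphism of a commutative cancellative
monoid into a free abelian monoid with basis `P`, then the induced map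
`θ : H → B(G₀)`, sending `a` to the multiset of classes (in `Cl(φ)`) of the basis
elements (prime divisors) occurring in `φ(a)` with multiplicity, is a transfer
homomorphism onto the monoid `B(G₀)` of zero-sum sequences over the set
`G₀ = {[p] : p ∈ P} ⊆ Cl(φ)` of classes containing prime divisors. -/
theorem stmt_6 {P H : Type*} [CancelCommMonoid H]
    (φ : H →* Multiplicative (Multiset P))
    (hdiv : ∀ a b : H, φ a ∣ φ b → a ∣ b)
    (G₀ : Set (ClassGrp φ))
    (hG₀ : G₀ = Set.range fun p : P => divClass φ (Finsupp.single p 1))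
    (θ : H → Multiset (ClassGrp φ))
    (hθ : ∀ a : H, θ a = (Multiplicative.toAdd (φ a)).map
      fun p => divClass φ (Finsupp.single p 1)) :
    -- `θ` is a monoid homomorphism into the monoid of zero-sum sequences over `G₀` …
    (∀ a b : H, θ (a * b) = θ a + θ b) ∧
    (∀ a : H, (∀ g ∈ θ a, g ∈ G₀) ∧ (θ a).sum = 0) ∧
    -- (T1) `θ` is surjective onto `B(G₀)`, and `θ a` trivial forces `a` invertible
    (∀ S : Multiset (ClassGrp φ), (∀ g ∈ S, g ∈ G₀) → S.sum = 0 → ∃ a : H, θ a = S) ∧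
    (∀ a : H, θ a = 0 → IsUnit a) ∧
    -- (T2) factorizations of `θ a` in `B(G₀)` lift to factorizations of `a`
    (∀ (a : H) (S₁ S₂ : Multiset (ClassGrp φ)), θ a = S₁ + S₂ →
      ((∀ g ∈ S₁, g ∈ G₀) ∧ S₁.sum = 0) → ((∀ g ∈ S₂, g ∈ G₀) ∧ S₂.sum = 0) →
      ∃ b₁ b₂ : H, a = b₁ * b₂ ∧ θ b₁ = S₁ ∧ θ b₂ = S₂) := by
  classical
  refine ⟨?_, ?_, ?_, ?_, ?_⟩
  · intro a b
    simp [hθ, map_mul]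
  · intro a
    refine ⟨?_, ?_⟩
    · intro g hg
      rw [hθ] at hg
      obtain ⟨p, -, rfl⟩ := Multiset.mem_map.1 hg
      rw [hG₀]; exact ⟨p, rfl⟩
    · rw [hθ, divClass_freeEmb_sum']
      exact (QuotientAddGroup.eq_zero_iff _).2 (mem_im' φ a)
  · intro S hS hsum
    obtain ⟨T, hT⟩ := multiset_lift' (fun p => divClass φ (Finsupp.single p 1)) S
      (fun g hg => by have := hS g hg; rwa [hG₀] at this)
    obtain ⟨b, hb⟩ := exists_rep' φ hdiv T (by rw [hT]; exact hsum)
    exact ⟨b, by rw [hθ, hb, hT]⟩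
  · intro a ha
    rw [hθ, Multiset.map_eq_zero] at ha
    have h1 : φ a ∣ φ 1 := by
      have : φ a = 1 := Multiplicative.toAdd.injective (by simpa using ha)
      rw [this, map_one]
    exact isUnit_of_dvd_one (hdiv a 1 h1)
  · rintro a S₁ S₂ hsplit ⟨h1G, h1s⟩ ⟨h2G, h2s⟩
    rw [hθ] at hsplit
    obtain ⟨A₁, A₂, hA, hm1, hm2⟩ :=
      multiset_split' (fun p => divClass φ (Finsupp.single p 1)) S₁ S₂ _ hsplit
    obtain ⟨b₁, hb₁⟩ := exists_rep' φ hdiv A₁ (by rw [hm1]; exact h1s)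
    have hdvd : φ b₁ ∣ φ a := by
      refine ⟨Multiplicative.ofAdd A₂, Multiplicative.toAdd.injective ?_⟩
      simp only [toAdd_mul, toAdd_ofAdd, hb₁]
      exact hA
    obtain ⟨b₂, rfl⟩ := hdiv _ _ hdvd
    have hb₂ : Multiplicative.toAdd (φ b₂) = A₂ := by
      have h3 : Multiplicative.toAdd (φ (b₁ * b₂))
          = A₁ + Multiplicative.toAdd (φ b₂) := by simp [map_mul, hb₁]
      rw [h3] at hA
      exact add_left_cancel hA
    exact ⟨b₁, b₂, rfl, by rw [hθ, hb₁, hm1], by rw [hθ, hb₂, hm2]⟩
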